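/- There exists a probability space carrying random variables A₁, A₂, B₁, B₂, C₁, each taking values in {−1, 1} almost surely, such that: E[A₁] = E[A₂] = E[B₁] = E[B₂] = E[C₁] = 0; E[A_iB_j] = 0, E[A_iC₁] = 0 and E[B_iC₁] = 0 for all i, j ∈ {1,2}; E[A₁B₁C₁] = −1 and E[A₂B₂C₁] = −1; and E[A₁B₂C₁] = 0 and E[A₂B₁C₁] = 0. -/

import Mathlib

open MeasureTheory

noncomputable def ghszμ : Measure (Bool × Bool × Bool) := (8:ENNReal)⁻¹ • Measure.count

def sgn (b : Bool) : ℝ := if b then 1 else -1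

lemma ghsz_integral (f : Bool × Bool × Bool → ℝ) :
    ∫ ω, f ω ∂ghszμ = (1/8) * ∑ ω, f ω := by
  rw [ghszμ, integral_smul_measure, integral_fintype .of_finite]
  simp [mul_comm, Finset.mul_sum]

theorem stmt_15 :
    ∃ (Ω : Type) (_ : MeasurableSpace Ω) (μ : Measure Ω) (A₁ A₂ B₁ B₂ C₁ : Ω → ℝ),
      IsProbabilityMeasure μ ∧
      Measurable A₁ ∧ Measurable A₂ ∧ Measurable B₁ ∧ Measurable B₂ ∧ Measurable C₁ ∧
      (∀ᵐ ω ∂μ, A₁ ω = -1 ∨ A₁ ω = 1) ∧ (∀ᵐ ω ∂μ, A₂ ω = -1 ∨ A₂ ω = 1) ∧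
      (∀ᵐ ω ∂μ, B₁ ω = -1 ∨ B₁ ω = 1) ∧ (∀ᵐ ω ∂μ, B₂ ω = -1 ∨ B₂ ω = 1) ∧
      (∀ᵐ ω ∂μ, C₁ ω = -1 ∨ C₁ ω = 1) ∧
      (∫ ω, A₁ ω ∂μ = 0) ∧ (∫ ω, A₂ ω ∂μ = 0) ∧ (∫ ω, B₁ ω ∂μ = 0) ∧
      (∫ ω, B₂ ω ∂μ = 0) ∧ (∫ ω, C₁ ω ∂μ = 0) ∧
      (∫ ω, A₁ ω * B₁ ω ∂μ = 0) ∧ (∫ ω, A₁ ω * B₂ ω ∂μ = 0) ∧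
      (∫ ω, A₂ ω * B₁ ω ∂μ = 0) ∧ (∫ ω, A₂ ω * B₂ ω ∂μ = 0) ∧
      (∫ ω, A₁ ω * C₁ ω ∂μ = 0) ∧ (∫ ω, A₂ ω * C₁ ω ∂μ = 0) ∧
      (∫ ω, B₁ ω * C₁ ω ∂μ = 0) ∧ (∫ ω, B₂ ω * C₁ ω ∂μ = 0) ∧
      (∫ ω, A₁ ω * B₁ ω * C₁ ω ∂μ = -1) ∧ (∫ ω, A₂ ω * B₂ ω * C₁ ω ∂μ = -1) ∧
      (∫ ω, A₁ ω * B₂ ω * C₁ ω ∂μ = 0) ∧ (∫ ω, A₂ ω * B₁ ω * C₁ ω ∂μ = 0) := by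
  refine ⟨Bool × Bool × Bool, inferInstance, ghszμ,
    (fun ω => sgn ω.1), (fun ω => sgn ω.2.1),
    (fun ω => -(sgn ω.1 * sgn ω.2.2)), (fun ω => -(sgn ω.2.1 * sgn ω.2.2)),
    (fun ω => sgn ω.2.2), ?_, ?_, ?_, ?_, ?_, ?_, ?_, ?_, ?_, ?_, ?_,
    ?_, ?_, ?_, ?_, ?_, ?_, ?_, ?_, ?_, ?_, ?_, ?_, ?_, ?_, ?_, ?_, ?_⟩
  · constructor; rw [ghszμ]; simp; rw [ENNReal.inv_mul_cancel] <;> norm_num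
  all_goals first
    | exact measurable_of_finite _
    | (filter_upwards with ω; cases ω.1 <;> cases ω.2.1 <;> cases ω.2.2 <;> simp [sgn])
    | (rw [ghsz_integral]; norm_num [Fintype.sum_prod_type, sgn])
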